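/- Let D̃ : S×A → ℝ satisfy 0 < D̃(s,a) ≤ 1 for all (s,a). Then for all Q1, Q2 : S×A → ℝ and all y = (s0,a0,s1) ∈ S×A×S, the operator F satisfies p_span(F(Q1,D̃,y) − F(Q2,D̃,y)) ≤ (2/D̃(s0,a0))·p_span(Q1 − Q2). -/

import Mathlib

lemma span_aux (D m M c dp : ℝ) (hD : 0 < D) (hD1 : D ≤ 1)
    (h1 : m ≤ dp) (h2 : dp ≤ M) (h3 : m ≤ c) (h4 : c ≤ M) :
    (1 / D) * (c - dp) + dp ≤ m + (M - m) / D := by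
  have key : c - dp + D * dp ≤ D * m + (M - m) := by
    nlinarith [mul_nonneg (sub_nonneg.2 h1) (sub_nonneg.2 hD1)]
  have h2' := (div_le_div_iff_of_pos_right hD).mpr key
  calc (1 / D) * (c - dp) + dp = (c - dp + D * dp) / D := by field_simp
    _ ≤ (D * m + (M - m)) / D := h2'
    _ = m + (M - m) / D := by field_simp


/-- The span seminorm of a vector over a finite nonempty index set:
`p_span(x) = (max_i x_i - min_i x_i) / 2`. -/
noncomputable def pspan {I : Type*} [Fintype I] [Nonempty I] (x : I → ℝ) : ℝ :=
  ((⨆ i, x i) - ⨅ i, x i) / 2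

/-- The importance-sampling corrected sample operator `F`: for `y = (s0, a0, s1)`,
`[F(Q,D̃,y)](s,a) = (1{(s0,a0)=(s,a)}/D̃(s,a))·(R(s0,a0) + max_{a'} Q(s1,a') - Q(s0,a0)) + Q(s,a)`. -/
noncomputable def Fop {S A : Type*} [Nonempty A] [DecidableEq S] [DecidableEq A]
    (R : S × A → ℝ) (Q : S × A → ℝ) (Dt : S × A → ℝ) (y : S × A × S) : S × A → ℝ :=
  fun sa =>
    ((if (y.1, y.2.1) = sa then (1 : ℝ) else 0) / Dt sa) *
        (R (y.1, y.2.1) + (⨆ a' : A, Q (y.2.2, a')) - Q (y.1, y.2.1))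
      + Q sa

/-- Lipschitz property of `F` in the span seminorm: for `0 < D̃ ≤ 1`,
`p_span(F(Q1,D̃,y) - F(Q2,D̃,y)) ≤ (2/D̃(s0,a0))·p_span(Q1 - Q2)`. -/
theorem Fop_lipschitz {S A : Type*} [Fintype S] [Fintype A] [Nonempty S] [Nonempty A]
    [DecidableEq S] [DecidableEq A] (R : S × A → ℝ)
    (Dt : S × A → ℝ) (hD0 : ∀ sa, 0 < Dt sa) (hD1 : ∀ sa, Dt sa ≤ 1) :
    ∀ (Q1 Q2 : S × A → ℝ) (y : S × A × S),
      pspan (fun sa => Fop (A := A) R Q1 Dt y sa - Fop (A := A) R Q2 Dt y sa)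
        ≤ (2 / Dt (y.1, y.2.1)) * pspan (fun sa => Q1 sa - Q2 sa) := by
  intro Q1 Q2 y
  obtain ⟨s0, a0, s1⟩ := y
  have hD : 0 < Dt (s0, a0) := hD0 _
  have hD1' : Dt (s0, a0) ≤ 1 := hD1 (s0, a0)
  have hM : ∀ sa, Q1 sa - Q2 sa ≤ ⨆ i, Q1 i - Q2 i :=
    fun sa => le_ciSup (f := fun i => Q1 i - Q2 i) (Set.Finite.bddAbove (Set.finite_range _)) sa
  have hm : ∀ sa, (⨅ i, Q1 i - Q2 i) ≤ Q1 sa - Q2 sa :=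
    fun sa => ciInf_le (f := fun i => Q1 i - Q2 i) (Set.Finite.bddBelow (Set.finite_range _)) sa
  have hmM : (⨅ i, Q1 i - Q2 i) ≤ ⨆ i, Q1 i - Q2 i :=
    (hm (Classical.arbitrary _)).trans (hM _)
  have hcM : (⨆ a' : A, Q1 (s1, a')) - (⨆ a' : A, Q2 (s1, a')) ≤ ⨆ i, Q1 i - Q2 i := by
    have h : (⨆ a' : A, Q1 (s1, a')) ≤ (⨆ a' : A, Q2 (s1, a')) + ⨆ i, Q1 i - Q2 i := by
      apply ciSup_le
      intro a
      have h1 := hM (s1, a)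
      have h2 : Q2 (s1, a) ≤ ⨆ a' : A, Q2 (s1, a') :=
        le_ciSup (Set.Finite.bddAbove (Set.finite_range fun a' => Q2 (s1, a'))) a
      linarith
    linarith
  have hmc : (⨅ i, Q1 i - Q2 i) ≤ (⨆ a' : A, Q1 (s1, a')) - (⨆ a' : A, Q2 (s1, a')) := by
    have h : (⨆ a' : A, Q2 (s1, a')) ≤ (⨆ a' : A, Q1 (s1, a')) - ⨅ i, Q1 i - Q2 i := by
      apply ciSup_le
      intro a
      have h1 := hm (s1, a)
      have h2 : Q1 (s1, a) ≤ ⨆ a' : A, Q1 (s1, a') :=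
        le_ciSup (Set.Finite.bddAbove (Set.finite_range fun a' => Q1 (s1, a'))) a
      linarith
    linarith
  have hKge : (⨆ i, Q1 i - Q2 i) - (⨅ i, Q1 i - Q2 i)
      ≤ ((⨆ i, Q1 i - Q2 i) - ⨅ i, Q1 i - Q2 i) / Dt (s0, a0) := by
    rw [le_div_iff₀ hD]; nlinarith
  have hgub : ∀ sa, Fop (A := A) R Q1 Dt (s0, a0, s1) sa - Fop (A := A) R Q2 Dt (s0, a0, s1) sa
      ≤ (⨅ i, Q1 i - Q2 i) + ((⨆ i, Q1 i - Q2 i) - ⨅ i, Q1 i - Q2 i) / Dt (s0, a0) := by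
    intro sa
    have hdm := hm sa
    have hdM := hM sa
    have hd0m := hm (s0, a0)
    have hd0M := hM (s0, a0)
    simp only [Fop]
    by_cases h : (s0, a0) = sa
    · subst h
      simp only [eq_self_iff_true, if_true]
      have := span_aux (Dt (s0, a0)) (⨅ i, Q1 i - Q2 i) (⨆ i, Q1 i - Q2 i)
        ((⨆ a' : A, Q1 (s1, a')) - ⨆ a' : A, Q2 (s1, a'))
        (Q1 (s0, a0) - Q2 (s0, a0)) hD hD1' hd0m hd0M hmc hcM
      linarith
    · simp only [if_neg h, zero_div, zero_mul, zero_add]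
      linarith
  have hglb : ∀ sa, (⨆ i, Q1 i - Q2 i) - ((⨆ i, Q1 i - Q2 i) - ⨅ i, Q1 i - Q2 i) / Dt (s0, a0)
      ≤ Fop (A := A) R Q1 Dt (s0, a0, s1) sa - Fop (A := A) R Q2 Dt (s0, a0, s1) sa := by
    intro sa
    have hdm := hm sa
    have hdM := hM sa
    have hd0m := hm (s0, a0)
    have hd0M := hM (s0, a0)
    simp only [Fop]
    by_cases h : (s0, a0) = sa
    · subst h
      simp only [eq_self_iff_true, if_true]
      have := span_aux (Dt (s0, a0)) (-(⨆ i, Q1 i - Q2 i)) (-(⨅ i, Q1 i - Q2 i))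
        (-((⨆ a' : A, Q1 (s1, a')) - ⨆ a' : A, Q2 (s1, a')))
        (-(Q1 (s0, a0) - Q2 (s0, a0))) hD hD1'
        (neg_le_neg hd0M) (neg_le_neg hd0m) (neg_le_neg hcM) (neg_le_neg hmc)
      ring_nf at this ⊢
      linarith
    · simp only [if_neg h, zero_div, zero_mul, zero_add]
      linarith
  have hsup := ciSup_le hgub
  have hinf := le_ciInf hglb
  simp only [pspan]
  have hEq : 2 / Dt (s0, a0) * (((⨆ i, Q1 i - Q2 i) - ⨅ i, Q1 i - Q2 i) / 2)
      = ((⨆ i, Q1 i - Q2 i) - ⨅ i, Q1 i - Q2 i) / Dt (s0, a0) := by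
    field_simp
  rw [hEq]
  linarith [hsup, hinf, hmM]
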